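/- (Equality case in Picone's identity.) Let E be a real inner product space, Ω ⊆ E an open connected set, p ∈ (1,∞), and let u, v : E → ℝ be differentiable on Ω with u ≥ 0 and v > 0 on Ω. Define L(u,v) = ‖∇u‖^p + (p−1)(u^p/v^p)‖∇v‖^p − p(u^{p−1}/v^{p−1})‖∇v‖^{p−2}⟨∇u,∇v⟩, with the convention that the term containing ‖∇v‖^{p−2} is 0 at points where ∇v = 0. If L(u,v) = 0 at every point of Ω, then there exists a constant c ≥ 0 such that u = c·v on Ω. -/

import Mathlib

open Set
open scoped RealInnerProductSpace

lemma picone_young_eq {p : ℝ} (hp : 1 < p) {a c : ℝ} (ha : 0 ≤ a) (hc : 0 ≤ c)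
    (h : a ^ p + (p - 1) * c ^ p - p * c ^ (p - 1) * a ≤ 0) : a = c := by
  rcases eq_or_lt_of_le hc with hc0 | hc0
  · rw [← hc0] at h ⊢
    have h1 : (0:ℝ) ^ p = 0 := Real.zero_rpow (by linarith)
    have h2 : (0:ℝ) ^ (p - 1) = 0 := Real.zero_rpow (by linarith)
    rw [h1, h2] at h
    have h3 : 0 ≤ a ^ p := Real.rpow_nonneg ha p
    have h4 : a ^ p = 0 := le_antisymm (by linarith) h3
    exact (Real.rpow_eq_zero ha (by linarith : p ≠ 0)).mp h4
  · by_contra hne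
    have hdiv_ne : a / c ≠ 1 := fun h1 => hne (by field_simp at h1; exact h1)
    set s : ℝ := a / c - 1 with hs_def
    have hs : -1 ≤ s := by
      have : 0 ≤ a / c := div_nonneg ha hc
      simp only [hs_def]; linarith
    have hs' : s ≠ 0 := sub_ne_zero.mpr hdiv_ne
    have hB := one_add_mul_self_lt_rpow_one_add hs hs' hp
    have h1s : 1 + s = a / c := by simp [hs_def]
    rw [h1s, Real.div_rpow ha hc0.le p] at hB
    have hcp : 0 < c ^ p := Real.rpow_pos_of_pos hc0 p
    have hc1 : c ^ (p - 1) * c = c ^ p := by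
      rw [← Real.rpow_add_one hc0.ne' (p - 1)]; norm_num
    have hB2 : (1 + p * s) * c ^ p < a ^ p := (lt_div_iff₀ hcp).mp hB
    have hsc : s * c ^ p = a * c ^ (p - 1) - c ^ p := by
      rw [hs_def, sub_mul, one_mul, ← hc1]
      field_simp
    nlinarith [hB2, hsc]

/-- Pointwise equality case: the gradients are proportional. -/
lemma picone_pointwise
    {E : Type*} [NormedAddCommGroup E] [InnerProductSpace ℝ E] [CompleteSpace E]
    {p : ℝ} (hp : 1 < p) {Gu Gv : E} {U V : ℝ} (hU : 0 ≤ U) (hV : 0 < V)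
    (hLx : ‖Gu‖ ^ p + (p - 1) * (U ^ p / V ^ p) * ‖Gv‖ ^ p
      - p * (U ^ (p - 1) / V ^ (p - 1)) * ‖Gv‖ ^ (p - 2) * ⟪Gu, Gv⟫ = 0) :
    Gu = (U / V) • Gv := by
  set w : ℝ := U / V with hw_def
  have hw : 0 ≤ w := div_nonneg hU hV.le
  by_cases hGv : Gv = 0
  · have h0 : (0:ℝ) ^ p = 0 := Real.zero_rpow (by linarith)
    rw [hGv] at hLx ⊢
    simp only [norm_zero, inner_zero_right, mul_zero, sub_zero, h0, mul_zero, add_zero] at hLx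
    have := (Real.rpow_eq_zero (norm_nonneg Gu) (by linarith : p ≠ 0)).mp hLx
    rw [norm_eq_zero] at this
    simp [this]
  · have hb : 0 < ‖Gv‖ := norm_pos_iff.mpr hGv
    set a := ‖Gu‖ with ha_def
    set b := ‖Gv‖ with hb_def
    have hwp : U ^ p / V ^ p = w ^ p := (Real.div_rpow hU hV.le p).symm
    have hwp1 : U ^ (p - 1) / V ^ (p - 1) = w ^ (p - 1) := (Real.div_rpow hU hV.le (p - 1)).symm
    rw [hwp, hwp1] at hLx
    have hs := real_inner_le_norm Gu Gv
    have hcoeff : 0 ≤ p * w ^ (p - 1) * b ^ (p - 2) := by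
      have := Real.rpow_nonneg hw (p - 1)
      have := Real.rpow_nonneg hb.le (p - 2)
      positivity
    have hb1 : b ^ (p - 2) * b = b ^ (p - 1) := by
      rw [← Real.rpow_add_one hb.ne' (p - 2)]
      congr 1; ring
    have hmul : (w * b) ^ p = w ^ p * b ^ p := Real.mul_rpow hw hb.le
    have hmul1 : (w * b) ^ (p - 1) = w ^ (p - 1) * b ^ (p - 1) := Real.mul_rpow hw hb.le
    -- Young inequality chain
    have hineq : a ^ p + (p - 1) * (w * b) ^ p - p * (w * b) ^ (p - 1) * a ≤ 0 := by
      have h1 : p * w ^ (p - 1) * b ^ (p - 2) * ⟪Gu, Gv⟫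
          ≤ p * w ^ (p - 1) * b ^ (p - 2) * (a * b) :=
        mul_le_mul_of_nonneg_left hs hcoeff
      have h2 : p * w ^ (p - 1) * b ^ (p - 2) * (a * b) = p * (w * b) ^ (p - 1) * a := by
        rw [hmul1, ← hb1]; ring
      rw [hmul]
      nlinarith [hLx, h1, h2]
    have hab : a = w * b :=
      picone_young_eq hp (norm_nonneg Gu) (mul_nonneg hw hb.le) hineq
    by_cases hw0 : w = 0
    · have haz : a = 0 := by rw [hab, hw0, zero_mul]
      have : Gu = 0 := norm_eq_zero.mp haz
      simp [this, hw0]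
    · have hwpos : 0 < w := lt_of_le_of_ne hw (Ne.symm hw0)
      -- derive equality in Cauchy–Schwarz
      have hap : a ^ p = (w * b) ^ (p - 1) * a := by
        rw [hab, ← Real.rpow_add_one (by positivity : w * b ≠ 0) (p - 1)]
        norm_num
      have hseq : ⟪Gu, Gv⟫ = a * b := by
        have hcpos : 0 < p * w ^ (p - 1) * b ^ (p - 2) := by
          have := Real.rpow_pos_of_pos hwpos (p - 1)
          have := Real.rpow_pos_of_pos hb (p - 2)
          positivity
        apply mul_left_cancel₀ hcpos.ne'
        have e1 : p * w ^ (p - 1) * b ^ (p - 2) * (a * b) = p * (w * b) ^ (p - 1) * a := by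
          rw [hmul1, ← hb1]; ring
        have h4 : (w * b) ^ p = (w * b) ^ (p - 1) * a := by
          rw [hab, ← Real.rpow_add_one (by positivity : w * b ≠ 0) (p - 1)]
          congr 1; ring
        have e2 : a ^ p + (p - 1) * w ^ p * b ^ p = p * (w * b) ^ (p - 1) * a := by
          linear_combination hap + (p - 1) * (hmul.symm.trans h4)
        linarith [hLx, e1, e2]
      have hCS : ‖Gv‖ • Gu = ‖Gu‖ • Gv := inner_eq_norm_mul_iff_real.mp hseq
      -- b • Gu = a • Gv = (w*b) • Gv
      have : b • Gu = b • (w • Gv) := by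
        rw [hCS, ← ha_def, hab, smul_smul, mul_comm]
      exact smul_right_injective E hb.ne' this

theorem picone_equality_case
    {E : Type*} [NormedAddCommGroup E] [InnerProductSpace ℝ E] [CompleteSpace E]
    (Ω : Set E) (hΩ : IsOpen Ω) (hconn : IsConnected Ω) (p : ℝ) (hp : 1 < p)
    (u v : E → ℝ)
    (hu : ∀ x ∈ Ω, DifferentiableAt ℝ u x)
    (hv : ∀ x ∈ Ω, DifferentiableAt ℝ v x)
    (hu0 : ∀ x ∈ Ω, 0 ≤ u x)
    (hv0 : ∀ x ∈ Ω, 0 < v x)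
    (hL : ∀ x ∈ Ω,
      ‖gradient u x‖ ^ p
        + (p - 1) * (u x ^ p / v x ^ p) * ‖gradient v x‖ ^ p
        - p * (u x ^ (p - 1) / v x ^ (p - 1)) * ‖gradient v x‖ ^ (p - 2)
            * ⟪gradient u x, gradient v x⟫ = 0) :
    ∃ c : ℝ, 0 ≤ c ∧ ∀ x ∈ Ω, u x = c * v x := by
  -- Step 1: gradients proportional
  have key : ∀ x ∈ Ω, gradient u x = (u x / v x) • gradient v x := fun x hx =>
    picone_pointwise hp (hu0 x hx) (hv0 x hx) (hL x hx)
  -- Step 2: the quotient has zero derivative on Ω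
  set g : E → ℝ := fun x => u x / v x with hg_def
  have hg0 : ∀ x ∈ Ω, HasFDerivAt g (0 : E →L[ℝ] ℝ) x := by
    intro x hx
    have hV := hv0 x hx
    have hu' : HasFDerivAt u (fderiv ℝ u x) x := (hu x hx).hasFDerivAt
    have hv' : HasFDerivAt v (fderiv ℝ v x) x := (hv x hx).hasFDerivAt
    -- fderiv relation from gradient relation
    have hfd : fderiv ℝ u x = (u x / v x) • fderiv ℝ v x := by
      have h1 := key x hx
      have h2 := congrArg (InnerProductSpace.toDual ℝ E) h1
      simpa only [gradient, LinearIsometryEquiv.apply_symm_apply, map_smul] using h2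
    have hinv : HasFDerivAt (fun y => (v y)⁻¹)
        ((-(v x ^ 2)⁻¹) • fderiv ℝ v x) x :=
      (hasDerivAt_inv hV.ne').comp_hasFDerivAt x hv'
    have hmul := hu'.mul hinv
    have : HasFDerivAt (fun y => u y * (v y)⁻¹)
        (u x • ((-(v x ^ 2)⁻¹) • fderiv ℝ v x) + (v x)⁻¹ • fderiv ℝ u x) x := hmul
    have hz : u x • ((-(v x ^ 2)⁻¹) • fderiv ℝ v x) + (v x)⁻¹ • fderiv ℝ u x = 0 := by
      rw [hfd, smul_smul, smul_smul, ← add_smul]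
      convert zero_smul ℝ (fderiv ℝ v x)
      field_simp
      ring
    rw [hz] at this
    have hgeq : g = fun y => u y * (v y)⁻¹ := by
      funext y; simp [hg_def, div_eq_mul_inv]
    rw [hgeq]
    exact this
  -- Step 3: g is locally constant on Ω, hence constant
  haveI : PreconnectedSpace Ω := Subtype.preconnectedSpace hconn.isPreconnected
  let f : Ω → ℝ := fun x : Ω => g x.1
  have hlc : IsLocallyConstant f := by
    rw [IsLocallyConstant.iff_exists_open]
    rintro ⟨x, hx⟩
    obtain ⟨ε, hε, hball⟩ := Metric.isOpen_iff.mp hΩ x hx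
    have hUopen : IsOpen ((Subtype.val : Ω → E) ⁻¹' Metric.ball x ε) :=
      Metric.isOpen_ball.preimage continuous_subtype_val
    refine ⟨(Subtype.val : Ω → E) ⁻¹' Metric.ball x ε, hUopen,
      by simpa using Metric.mem_ball_self (x := x) hε, ?_⟩
    rintro ⟨y, hy⟩ hyb
    have hdiff : DifferentiableOn ℝ g (Metric.ball x ε) := fun z hz =>
      ((hg0 z (hball hz)).differentiableAt).differentiableWithinAt
    have hfd0 : ∀ z ∈ Metric.ball x ε, fderivWithin ℝ g (Metric.ball x ε) z = 0 := by
      intro z hz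
      rw [fderivWithin_of_isOpen Metric.isOpen_ball hz]
      exact (hg0 z (hball hz)).fderiv
    exact (convex_ball x ε).is_const_of_fderivWithin_eq_zero hdiff hfd0
      (by simpa using hyb) (Metric.mem_ball_self hε)
  obtain ⟨x₀, hx₀⟩ := hconn.nonempty
  refine ⟨g x₀, div_nonneg (hu0 x₀ hx₀) (hv0 x₀ hx₀).le, ?_⟩
  intro x hx
  have hgx : u x / v x = g x₀ := congrFun (hlc.eq_const ⟨x₀, hx₀⟩) ⟨x, hx⟩
  have hvne := (hv0 x hx).ne'
  rw [div_eq_iff hvne] at hgx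
  exact hgx
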